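/- arXiv:1105.2126 — 4 statements merged into one kernel-verified Lean document; each statement's English description precedes it below -/
import Mathlib

section
/- Let δ>0, L>0, and q_x, q_s, D ∈ ℝ^{m×n} with ‖q_x + q_s - D‖_F > δ. Set θ* = (L/2)(‖q_x+q_s-D‖_F/δ - 1), X* = (θ*/(L+2θ*))(D - q_s) + ((L+θ*)/(L+2θ*)) q_x, and S* = (θ*/(L+2θ*))(D - q_x) + ((L+θ*)/(L+2θ*)) q_s. Then ‖X*+S*-D‖_F = δ, θ* > 0, and (X*,S*) minimizes (L/2)(‖X-q_x‖_F² + ‖S-q_s‖_F²) over χ = {(X,S) : ‖X+S-D‖_F ≤ δ}. -/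
open Finset

noncomputable def fprod {m n : ℕ} (A B : Matrix (Fin m) (Fin n) ℝ) : ℝ :=
  ∑ i, ∑ j, A i j * B i j

noncomputable def frob {m n : ℕ} (A : Matrix (Fin m) (Fin n) ℝ) : ℝ :=
  Real.sqrt (∑ i, ∑ j, (A i j) ^ 2)

noncomputable def l1 {m n : ℕ} (A : Matrix (Fin m) (Fin n) ℝ) : ℝ :=
  ∑ i, ∑ j, |A i j|

lemma frob_sq {m n : ℕ} (A : Matrix (Fin m) (Fin n) ℝ) :
    frob A ^ 2 = ∑ i, ∑ j, (A i j) ^ 2 := by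
  unfold frob
  rw [Real.sq_sqrt]
  positivity

lemma frob_nonneg {m n : ℕ} (A : Matrix (Fin m) (Fin n) ℝ) : 0 ≤ frob A :=
  Real.sqrt_nonneg _

lemma frob_smul {m n : ℕ} (c : ℝ) (A : Matrix (Fin m) (Fin n) ℝ) :
    frob (c • A) = |c| * frob A := by
  unfold frob
  rw [← Real.sqrt_sq_eq_abs, ← Real.sqrt_mul (sq_nonneg c)]
  congr 1
  simp [Matrix.smul_apply, mul_pow, Finset.mul_sum]

lemma sum_comb {m n : ℕ} (L θ : ℝ) (a b c : Matrix (Fin m) (Fin n) ℝ) :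
    ∑ i, ∑ j, (L/2*((a i j)^2 + (b i j)^2) + θ/2*(c i j)^2)
      = L/2*((∑ i, ∑ j, (a i j)^2) + ∑ i, ∑ j, (b i j)^2)
        + θ/2*(∑ i, ∑ j, (c i j)^2) := by
  simp [Finset.sum_add_distrib, Finset.mul_sum, mul_add]

set_option maxHeartbeats 1000000 in
theorem stmt2 {m n : ℕ} (δ L : ℝ) (hδ : 0 < δ) (hL : 0 < L)
    (qx qs D : Matrix (Fin m) (Fin n) ℝ)
    (h : δ < frob (qx + qs - D))
    (θ : ℝ) (hθ : θ = L / 2 * (frob (qx + qs - D) / δ - 1))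
    (Xs Ss : Matrix (Fin m) (Fin n) ℝ)
    (hX : Xs = (θ / (L + 2 * θ)) • (D - qs) + ((L + θ) / (L + 2 * θ)) • qx)
    (hS : Ss = (θ / (L + 2 * θ)) • (D - qx) + ((L + θ) / (L + 2 * θ)) • qs) :
    frob (Xs + Ss - D) = δ ∧ 0 < θ ∧
    ∀ X S : Matrix (Fin m) (Fin n) ℝ, frob (X + S - D) ≤ δ →
      L / 2 * (frob (Xs - qx) ^ 2 + frob (Ss - qs) ^ 2) ≤
        L / 2 * (frob (X - qx) ^ 2 + frob (S - qs) ^ 2) := by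
  set f := frob (qx + qs - D) with hf
  have hf0 : 0 < f := lt_trans hδ h
  have hθpos : 0 < θ := by
    rw [hθ]
    have : 1 < f / δ := (one_lt_div hδ).2 h
    nlinarith
  have hden : 0 < L + 2 * θ := by linarith
  have hdenf : L + 2 * θ = L * f / δ := by
    rw [hθ]; field_simp; ring
  -- matrix identity
  have hsum : Xs + Ss - D = (L / (L + 2 * θ)) • (qx + qs - D) := by
    funext i j
    simp only [hX, hS, Matrix.add_apply, Matrix.sub_apply, Matrix.smul_apply, smul_eq_mul]
    field_simp
    ring
  have part1 : frob (Xs + Ss - D) = δ := by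
    rw [hsum, frob_smul, abs_of_pos (by positivity : (0:ℝ) < L / (L + 2*θ)), ← hf, hdenf]
    field_simp
  refine ⟨part1, hθpos, ?_⟩
  intro X S hXS
  -- stationarity per entry
  have statX : ∀ i j, L * (Xs i j - qx i j) + θ * (Xs i j + Ss i j - D i j) = 0 := by
    intro i j
    simp only [hX, hS, Matrix.add_apply, Matrix.sub_apply, Matrix.smul_apply, smul_eq_mul]
    field_simp
    ring
  have statS : ∀ i j, L * (Ss i j - qs i j) + θ * (Xs i j + Ss i j - D i j) = 0 := by
    intro i j
    simp only [hX, hS, Matrix.add_apply, Matrix.sub_apply, Matrix.smul_apply, smul_eq_mul]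
    field_simp
    ring
  have key : ∑ i, ∑ j, (L/2*(((Xs - qx) i j)^2 + ((Ss - qs) i j)^2) + θ/2*(((Xs + Ss - D) i j))^2)
      ≤ ∑ i, ∑ j, (L/2*(((X - qx) i j)^2 + ((S - qs) i j)^2) + θ/2*(((X + S - D) i j))^2) := by
    apply Finset.sum_le_sum
    intro i _
    apply Finset.sum_le_sum
    intro j _
    simp only [Matrix.add_apply, Matrix.sub_apply]
    have h1 := statX i j
    have h2 := statS i j
    have e : (L/2*((X i j - qx i j)^2 + (S i j - qs i j)^2) + θ/2*(X i j + S i j - D i j)^2)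
        - (L/2*((Xs i j - qx i j)^2 + (Ss i j - qs i j)^2) + θ/2*(Xs i j + Ss i j - D i j)^2)
      = L/2*(X i j - Xs i j)^2 + L/2*(S i j - Ss i j)^2
        + θ/2*(X i j + S i j - Xs i j - Ss i j)^2
        + (X i j - Xs i j)*(L * (Xs i j - qx i j) + θ * (Xs i j + Ss i j - D i j))
        + (S i j - Ss i j)*(L * (Ss i j - qs i j) + θ * (Xs i j + Ss i j - D i j)) := by
      ring
    rw [h1, h2] at e
    have hn : 0 ≤ L/2*(X i j - Xs i j)^2 + L/2*(S i j - Ss i j)^2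
        + θ/2*(X i j + S i j - Xs i j - Ss i j)^2 := by positivity
    linarith
  rw [sum_comb, sum_comb] at key
  have e1 : ∑ i, ∑ j, ((Xs - qx) i j)^2 = frob (Xs - qx) ^ 2 := (frob_sq _).symm
  have e2 : ∑ i, ∑ j, ((Ss - qs) i j)^2 = frob (Ss - qs) ^ 2 := (frob_sq _).symm
  have e3 : ∑ i, ∑ j, ((Xs + Ss - D) i j)^2 = frob (Xs + Ss - D) ^ 2 := (frob_sq _).symm
  have e4 : ∑ i, ∑ j, ((X - qx) i j)^2 = frob (X - qx) ^ 2 := (frob_sq _).symm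
  have e5 : ∑ i, ∑ j, ((S - qs) i j)^2 = frob (S - qs) ^ 2 := (frob_sq _).symm
  have e6 : ∑ i, ∑ j, ((X + S - D) i j)^2 = frob (X + S - D) ^ 2 := (frob_sq _).symm
  rw [e1, e2, e3, e4, e5, e6, part1] at key
  have hle : frob (X + S - D) ^ 2 ≤ δ ^ 2 := by
    have := frob_nonneg (X + S - D)
    nlinarith
  have h2 : θ/2 * frob (X + S - D) ^ 2 ≤ θ/2 * δ ^ 2 :=
    mul_le_mul_of_nonneg_left hle (by positivity)
  linarith
end

section
/- Let ξ > 0, ρ > 0, and A ∈ ℝ^{m×n} with at least one nonzero entry. Define φ(θ) = ‖min{(ξ/θ)E, (ρ/(ρ+θ))|A|}‖_F for θ > 0, where E is the all-ones matrix, |A| is the entrywise absolute value, and min is taken entrywise. Then φ is strictly decreasing on (0,∞), lim_{θ→0⁺} φ(θ) = ‖A‖_F, and lim_{θ→∞} φ(θ) = 0. Consequently, for every δ with 0 < δ < ‖A‖_F there exists a unique θ* > 0 with φ(θ*) = δ. -/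
open Finset

theorem stmt5 {m n : ℕ} (ξ ρ : ℝ) (hξ : 0 < ξ) (hρ : 0 < ρ)
    (A : Matrix (Fin m) (Fin n) ℝ) (hA : A ≠ 0)
    (φ : ℝ → ℝ)
    (hφ : ∀ θ, φ θ = frob (Matrix.of fun i j => min (ξ / θ) (ρ / (ρ + θ) * |A i j|))) :
    StrictAntiOn φ (Set.Ioi 0) ∧
    Filter.Tendsto φ (nhdsWithin 0 (Set.Ioi 0)) (nhds (frob A)) ∧
    Filter.Tendsto φ Filter.atTop (nhds 0) ∧
    ∀ δ : ℝ, 0 < δ → δ < frob A → ∃! θ : ℝ, 0 < θ ∧ φ θ = δ := by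
  obtain ⟨i0, j0, ha0⟩ : ∃ i j, A i j ≠ 0 := by
    by_contra h
    push_neg at h
    exact hA (by ext i j; simpa using h i j)
  set g : ℝ → Fin m → Fin n → ℝ := fun θ i j => min (ξ / θ) (ρ / (ρ + θ) * |A i j|) with hg
  set S : ℝ → ℝ := fun θ => ∑ i, ∑ j, (g θ i j) ^ 2 with hS
  have hφS : ∀ θ, φ θ = Real.sqrt (S θ) := fun θ => by rw [hφ]; rfl
  have hgnn : ∀ θ, 0 < θ → ∀ i j, 0 ≤ g θ i j := by
    intro θ hθ i j
    have h1 : (0:ℝ) < ρ + θ := by linarith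
    exact le_min (by positivity) (by positivity)
  have hSnn : ∀ θ, 0 < θ → 0 ≤ S θ := by
    intro θ hθ
    apply Finset.sum_nonneg; intro i _
    apply Finset.sum_nonneg; intro j _
    positivity
  -- strict monotonicity of S
  have hSanti : ∀ s t : ℝ, 0 < s → s < t → S t < S s := by
    intro s t hs hst
    have ht : 0 < t := hs.trans hst
    have key : ∀ i j, g t i j ≤ g s i j := by
      intro i j
      have h1 : (0:ℝ) < ρ + s := by linarith
      have h2 : ρ + s ≤ ρ + t := by linarith
      exact min_le_min (by gcongr) (by gcongr)
    have keystrict : g t i0 j0 < g s i0 j0 := by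
      apply min_lt_min
      · gcongr
      · have ha : 0 < |A i0 j0| := abs_pos.mpr ha0
        have h1 : (0:ℝ) < ρ + s := by linarith
        have h2 : ρ / (ρ + t) < ρ / (ρ + s) := by gcongr
        exact mul_lt_mul_of_pos_right h2 ha
    apply Finset.sum_lt_sum
    · intro i _
      apply Finset.sum_le_sum
      intro j _
      exact pow_le_pow_left₀ (hgnn t ht i j) (key i j) 2
    · refine ⟨i0, Finset.mem_univ _, Finset.sum_lt_sum ?_ ?_⟩
      · intro j _
        exact pow_le_pow_left₀ (hgnn t ht i0 j) (key i0 j) 2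
      · exact ⟨j0, Finset.mem_univ _,
          pow_lt_pow_left₀ keystrict (hgnn t ht i0 j0) two_ne_zero⟩
  have hSA : StrictAntiOn φ (Set.Ioi 0) := by
    intro s hs t ht hst
    rw [hφS, hφS]
    exact Real.sqrt_lt_sqrt (hSnn t (hs.trans hst)) (hSanti s t hs hst)
  -- limit at 0⁺
  have hS0 : Filter.Tendsto S (nhdsWithin 0 (Set.Ioi 0))
      (nhds (∑ i, ∑ j, (A i j) ^ 2)) := by
    apply tendsto_finset_sum
    intro i _
    apply tendsto_finset_sum
    intro j _
    have hgt : Filter.Tendsto (fun θ => g θ i j) (nhdsWithin 0 (Set.Ioi 0))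
        (nhds |A i j|) := by
      have hc : (0:ℝ) < ξ / (|A i j| + 1) := by positivity
      have hev : ∀ᶠ θ in nhdsWithin 0 (Set.Ioi 0),
          g θ i j = ρ / (ρ + θ) * |A i j| := by
        filter_upwards [Ioo_mem_nhdsGT_of_mem
          (⟨le_refl (0:ℝ), hc⟩ : (0:ℝ) ∈ Set.Ico 0 (ξ / (|A i j| + 1)))] with θ hθ
        obtain ⟨hθ0, hθc⟩ := hθ
        have hgt1 : |A i j| + 1 < ξ / θ := by
          rw [lt_div_iff₀ hθ0]
          have h := (lt_div_iff₀ (by positivity : (0:ℝ) < |A i j| + 1)).mp hθc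
          nlinarith
        have hle : ρ / (ρ + θ) * |A i j| ≤ |A i j| := by
          have h1 : ρ / (ρ + θ) ≤ 1 := by
            rw [div_le_one (by linarith)]; linarith
          calc ρ / (ρ + θ) * |A i j| ≤ 1 * |A i j| :=
                mul_le_mul_of_nonneg_right h1 (abs_nonneg _)
            _ = |A i j| := one_mul _
        exact min_eq_right (le_of_lt (lt_of_le_of_lt hle (by linarith)))
      have hc2 : Filter.Tendsto (fun θ : ℝ => ρ / (ρ + θ) * |A i j|)
          (nhdsWithin 0 (Set.Ioi 0)) (nhds |A i j|) := by
        have : ContinuousAt (fun θ : ℝ => ρ / (ρ + θ) * |A i j|) 0 := by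
          apply ContinuousAt.mul _ continuousAt_const
          exact ContinuousAt.div continuousAt_const
            (continuousAt_const.add continuousAt_id) (by simpa using hρ.ne')
        have h := this.continuousWithinAt (s := Set.Ioi 0)
        simpa [ContinuousWithinAt, div_self hρ.ne'] using h
      exact hc2.congr' (hev.mono fun θ h => h.symm)
    have := hgt.pow 2
    simpa [sq_abs] using this
  have hlim0 : Filter.Tendsto φ (nhdsWithin 0 (Set.Ioi 0)) (nhds (frob A)) := by
    have := (Real.continuous_sqrt.tendsto _).comp hS0
    refine Filter.Tendsto.congr (fun θ => (hφS θ).symm) ?_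
    simpa [frob, Function.comp_def] using this
  -- limit at ∞
  have hlimtop : Filter.Tendsto φ Filter.atTop (nhds 0) := by
    have hStop : Filter.Tendsto S Filter.atTop (nhds 0) := by
      have key : Filter.Tendsto (fun θ => ∑ i : Fin m, ∑ j : Fin n, (g θ i j) ^ 2)
          Filter.atTop (nhds (∑ _i : Fin m, ∑ _j : Fin n, (0:ℝ))) := by
        apply tendsto_finset_sum
        intro i _
        apply tendsto_finset_sum
        intro j _
        have hge : Filter.Tendsto (fun θ => g θ i j) Filter.atTop (nhds 0) := by
          apply squeeze_zero'
          · filter_upwards [Filter.eventually_gt_atTop (0:ℝ)] with θ hθ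
            exact hgnn θ hθ i j
          · filter_upwards with θ
            exact min_le_left _ _
          · exact Filter.Tendsto.div_atTop tendsto_const_nhds Filter.tendsto_id
        simpa using hge.pow 2
      simpa using key
    have := (Real.continuous_sqrt.tendsto _).comp hStop
    refine Filter.Tendsto.congr (fun θ => (hφS θ).symm) ?_
    simpa [Function.comp_def] using this
  refine ⟨hSA, hlim0, hlimtop, ?_⟩
  -- continuity on Ioi 0
  have hcont : ContinuousOn φ (Set.Ioi 0) := by
    have hcS : ContinuousOn S (Set.Ioi 0) := by
      apply continuousOn_finset_sum
      intro i _
      apply continuousOn_finset_sum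
      intro j _
      apply ContinuousOn.pow
      have c1 : ContinuousOn (fun θ : ℝ => ξ / θ) (Set.Ioi 0) :=
        ContinuousOn.div continuousOn_const continuousOn_id (fun θ hθ => ne_of_gt hθ)
      have c2 : ContinuousOn (fun θ : ℝ => ρ / (ρ + θ) * |A i j|) (Set.Ioi 0) :=
        ContinuousOn.mul (ContinuousOn.div continuousOn_const
          (continuousOn_const.add continuousOn_id)
          (fun θ hθ => by have h0 : (0:ℝ) < θ := hθ; positivity)) continuousOn_const
      exact fun θ hθ => Filter.Tendsto.min (c1 θ hθ) (c2 θ hθ)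
    have := Real.continuous_sqrt.comp_continuousOn hcS
    exact this.congr (fun θ _ => hφS θ)
  intro δ hδ0 hδA
  -- find θ₁ near 0 with δ < φ θ₁
  have h1 : ∀ᶠ θ in nhdsWithin 0 (Set.Ioi 0), δ < φ θ ∧ θ ∈ Set.Ioi (0:ℝ) :=
    (hlim0.eventually (eventually_gt_nhds hδA)).and self_mem_nhdsWithin
  obtain ⟨θ₁, hθ₁δ, hθ₁pos⟩ := h1.exists
  have h2 : ∀ᶠ θ in Filter.atTop, φ θ < δ ∧ θ₁ < θ :=
    (hlimtop.eventually (eventually_lt_nhds hδ0)).and (Filter.eventually_gt_atTop θ₁)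
  obtain ⟨θ₂, hθ₂δ, hθ₂gt⟩ := h2.exists
  have hθ₁p : (0:ℝ) < θ₁ := hθ₁pos
  have hsub : Set.Icc θ₁ θ₂ ⊆ Set.Ioi 0 := fun x hx => lt_of_lt_of_le hθ₁p hx.1
  have hivt := intermediate_value_Icc' (le_of_lt hθ₂gt) (hcont.mono hsub)
  have hδmem : δ ∈ Set.Icc (φ θ₂) (φ θ₁) := ⟨le_of_lt hθ₂δ, le_of_lt hθ₁δ⟩
  obtain ⟨θ, hθmem, hθeq⟩ := hivt hδmem
  have hθpos : 0 < θ := hsub hθmem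
  refine ⟨θ, ⟨hθpos, hθeq⟩, ?_⟩
  rintro y ⟨hy, hyeq⟩
  exact hSA.injOn hy hθpos (hyeq.trans hθeq.symm)
end

section
/- Let Φ : ℝ^{m×n} × ℝ^{m×n} → ℝ be of the form Φ(X,S) = φ(X) + ψ(X,S) with φ convex differentiable and ψ closed convex. Fix ρ > 0 and X⁰ ∈ ℝ^{m×n}, and let (X̂, Ŝ) minimize Q(Z,S) = ψ(Z,S) + φ(X⁰) + ⟨∇φ(X⁰), Z - X⁰⟩ + (ρ/2)‖Z - X⁰‖_F² over (Z,S). If Φ(X̂, Ŝ) ≤ Q(X̂, Ŝ), then for every (X,S): (2/ρ)(Φ(X,S) − Φ(X̂,Ŝ)) ≥ ‖X − X̂‖_F² − ‖X − X⁰‖_F². -/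
open Finset

theorem stmt10 {m n : ℕ}
    (φ : Matrix (Fin m) (Fin n) ℝ → ℝ)
    (gradφ : Matrix (Fin m) (Fin n) ℝ → Matrix (Fin m) (Fin n) ℝ)
    (hφconv : ConvexOn ℝ Set.univ φ)
    (hgrad : ∀ X Y, φ X + fprod (gradφ X) (Y - X) ≤ φ Y)
    (ψ : Matrix (Fin m) (Fin n) ℝ × Matrix (Fin m) (Fin n) ℝ → ℝ)
    (hψconv : ConvexOn ℝ Set.univ ψ) (hψlsc : LowerSemicontinuous ψ)
    (ρ : ℝ) (hρ : 0 < ρ) (X0 : Matrix (Fin m) (Fin n) ℝ)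
    (Q : Matrix (Fin m) (Fin n) ℝ → Matrix (Fin m) (Fin n) ℝ → ℝ)
    (hQ : ∀ Z S, Q Z S = ψ (Z, S) + φ X0 + fprod (gradφ X0) (Z - X0) + ρ / 2 * frob (Z - X0) ^ 2)
    (Xh Sh : Matrix (Fin m) (Fin n) ℝ)
    (hmin : ∀ Z S, Q Xh Sh ≤ Q Z S)
    (Φ : Matrix (Fin m) (Fin n) ℝ → Matrix (Fin m) (Fin n) ℝ → ℝ)
    (hΦ : ∀ X S, Φ X S = φ X + ψ (X, S))
    (hcond : Φ Xh Sh ≤ Q Xh Sh) :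
    ∀ X S, frob (X - Xh) ^ 2 - frob (X - X0) ^ 2 ≤ 2 / ρ * (Φ X S - Φ Xh Sh) := by
  intro X S
  set g := gradφ X0 with hg
  -- Key 1: Q X S ≤ Φ X S + ρ/2 * frob (X - X0)^2
  have key1 : Q X S ≤ Φ X S + ρ / 2 * frob (X - X0) ^ 2 := by
    have := hgrad X0 X
    rw [hQ, hΦ]
    linarith
  -- Key 2: strong convexity lower bound
  have key2 : ρ / 2 * frob (X - Xh) ^ 2 ≤ Q X S - Q Xh Sh := by
    apply le_of_forall_pos_le_add
    intro ε hε
    set c : ℝ := ρ / 2 * frob (X - Xh) ^ 2 with hc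
    have hcnn : 0 ≤ c := by
      have : (0:ℝ) ≤ frob (X - Xh) ^ 2 := sq_nonneg _
      positivity
    -- choose t
    obtain ⟨t, ht0, ht1, htc⟩ : ∃ t : ℝ, 0 < t ∧ t < 1 ∧ t * c ≤ ε := by
      rcases eq_or_lt_of_le hcnn with h | h
      · exact ⟨1/2, by norm_num, by norm_num, by rw [← h]; simp; positivity⟩
      · refine ⟨min (1/2) (ε / c), ?_, ?_, ?_⟩
        · exact lt_min (by norm_num) (by positivity)
        · exact lt_of_le_of_lt (min_le_left _ _) (by norm_num)
        · calc min (1/2) (ε/c) * c ≤ (ε/c) * c := by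
                apply mul_le_mul_of_nonneg_right (min_le_right _ _) hcnn
            _ = ε := by field_simp
    -- convex combination point
    set Zt : Matrix (Fin m) (Fin n) ℝ := (1 - t) • Xh + t • X with hZt
    set St : Matrix (Fin m) (Fin n) ℝ := (1 - t) • Sh + t • S with hSt
    have hψineq : ψ (Zt, St) ≤ (1 - t) * ψ (Xh, Sh) + t * ψ (X, S) := by
      have := hψconv.2 (Set.mem_univ (Xh, Sh)) (Set.mem_univ (X, S))
        (by linarith : (0:ℝ) ≤ 1 - t) (le_of_lt ht0) (by ring)
      simpa [Prod.smul_mk, Prod.mk_add_mk, smul_eq_mul] using this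
    have hlin : fprod g (Zt - X0) = (1 - t) * fprod g (Xh - X0) + t * fprod g (X - X0) := by
      simp only [fprod, Finset.mul_sum]
      rw [← Finset.sum_add_distrib]
      apply Finset.sum_congr rfl
      intro i _
      rw [← Finset.sum_add_distrib]
      apply Finset.sum_congr rfl
      intro j _
      simp only [hZt, Matrix.sub_apply, Matrix.add_apply, Matrix.smul_apply, smul_eq_mul]
      ring
    have hquad : frob (Zt - X0) ^ 2 = (1 - t) * frob (Xh - X0) ^ 2 + t * frob (X - X0) ^ 2
        - t * (1 - t) * frob (X - Xh) ^ 2 := by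
      simp only [frob_sq, Finset.mul_sum]
      rw [← Finset.sum_add_distrib, ← Finset.sum_sub_distrib]
      apply Finset.sum_congr rfl
      intro i _
      rw [← Finset.sum_add_distrib, ← Finset.sum_sub_distrib]
      apply Finset.sum_congr rfl
      intro j _
      simp only [hZt, Matrix.sub_apply, Matrix.add_apply, Matrix.smul_apply, smul_eq_mul]
      ring
    have hQt : Q Zt St ≤ (1 - t) * Q Xh Sh + t * Q X S - ρ / 2 * (t * (1 - t) * frob (X - Xh) ^ 2) := by
      rw [hQ Zt St, hQ Xh Sh, hQ X S, hlin, hquad]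
      nlinarith [hψineq]
    have hmin' := hmin Zt St
    have key' : ρ / 2 * ((1 - t) * frob (X - Xh) ^ 2) ≤ Q X S - Q Xh Sh := by
      have hyp := hmin'.trans hQt
      set F := frob (X - Xh) ^ 2 with hF
      set a := Q X S
      set b := Q Xh Sh
      have h2 : t * (ρ / 2 * ((1 - t) * F)) ≤ t * (a - b) := by nlinarith [hyp]
      exact le_of_mul_le_mul_left h2 ht0
    have : c - t * c ≤ Q X S - Q Xh Sh := by
      have he : ρ / 2 * ((1 - t) * frob (X - Xh) ^ 2) = c - t * c := by rw [hc]; ring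
      linarith [key', he.symm.le]
    linarith
  -- combine
  have hρ2 : (0:ℝ) < 2 / ρ := by positivity
  have hcomb : Q X S - Q Xh Sh ≤ Φ X S - Φ Xh Sh + ρ / 2 * frob (X - X0) ^ 2 := by
    linarith [hcond, key1]
  have := mul_le_mul_of_nonneg_left (le_trans key2 hcomb) hρ2.le
  have hne : ρ ≠ 0 := ne_of_gt hρ
  calc frob (X - Xh) ^ 2 - frob (X - X0) ^ 2
      = 2 / ρ * (ρ / 2 * frob (X - Xh) ^ 2) - frob (X - X0) ^ 2 := by field_simp
    _ ≤ 2 / ρ * (Φ X S - Φ Xh Sh + ρ / 2 * frob (X - X0) ^ 2) - frob (X - X0) ^ 2 := by linarith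
    _ = 2 / ρ * (Φ X S - Φ Xh Sh) := by field_simp; ring
end

section
/- Let X ∈ ℝ^{m×n} with singular value decomposition X = U diag(σ) Vᵀ (σ the vector of singular values). For μ > 0 define f_μ(X) = max{⟨X, U'⟩ − (μ/2)‖U'‖_F² : ‖U'‖₂ ≤ 1}, where ‖·‖₂ is the spectral norm. Then 0 ≤ ‖X‖_* − f_μ(X) ≤ (μ/2)·min{m,n}, where ‖X‖_* is the nuclear norm. -/
open Finset

noncomputable def matSpectralNorm {m n : ℕ} (U : Matrix (Fin m) (Fin n) ℝ) : ℝ :=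
  sSup {t | ∃ x : Fin n → ℝ, (∑ j, (x j) ^ 2) ≤ 1 ∧
    t = Real.sqrt (∑ i, (∑ j, U i j * x j) ^ 2)}

noncomputable def nuclearNorm {m n : ℕ} (X : Matrix (Fin m) (Fin n) ℝ) : ℝ :=
  sSup {t | ∃ U : Matrix (Fin m) (Fin n) ℝ, matSpectralNorm U ≤ 1 ∧ t = fprod X U}

noncomputable def fmu {m n : ℕ} (μ : ℝ) (X : Matrix (Fin m) (Fin n) ℝ) : ℝ :=
  sSup {t | ∃ U : Matrix (Fin m) (Fin n) ℝ, matSpectralNorm U ≤ 1 ∧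
    t = fprod X U - μ / 2 * fprod U U}

section aux
variable {m n : ℕ}

lemma specSet_bdd (U : Matrix (Fin m) (Fin n) ℝ) :
    BddAbove {t | ∃ x : Fin n → ℝ, (∑ j, (x j) ^ 2) ≤ 1 ∧
      t = Real.sqrt (∑ i, (∑ j, U i j * x j) ^ 2)} := by
  refine ⟨Real.sqrt (∑ i, ∑ j, (U i j) ^ 2), ?_⟩
  rintro t ⟨x, hx, rfl⟩
  apply Real.sqrt_le_sqrt
  apply Finset.sum_le_sum
  intro i _
  have h := Finset.sum_mul_sq_le_sq_mul_sq Finset.univ (fun j => U i j) x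
  have hU : (0:ℝ) ≤ ∑ j, (U i j) ^ 2 := Finset.sum_nonneg fun j _ => sq_nonneg _
  nlinarith

lemma le_spec (U : Matrix (Fin m) (Fin n) ℝ) (x : Fin n → ℝ)
    (hx : (∑ j, (x j) ^ 2) ≤ 1) :
    Real.sqrt (∑ i, (∑ j, U i j * x j) ^ 2) ≤ matSpectralNorm U :=
  le_csSup (specSet_bdd U) ⟨x, hx, rfl⟩

lemma col_bd {U : Matrix (Fin m) (Fin n) ℝ} (hU : matSpectralNorm U ≤ 1) (j : Fin n) :
    ∑ i, (U i j) ^ 2 ≤ 1 := by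
  have h := le_spec U (Pi.single j 1) (by
    simp [Pi.single_apply, apply_ite (· ^ (2:ℕ))])
  simp only [Pi.single_apply, mul_ite, mul_one, mul_zero, Finset.sum_ite_eq',
    Finset.mem_univ, if_true] at h
  have h1 : Real.sqrt (∑ i, (U i j) ^ 2) ≤ 1 := h.trans hU
  have h2 : (0:ℝ) ≤ ∑ i, (U i j) ^ 2 := Finset.sum_nonneg fun i _ => sq_nonneg _
  nlinarith [Real.sq_sqrt h2, Real.sqrt_nonneg (∑ i, (U i j) ^ 2)]

lemma row_bd {U : Matrix (Fin m) (Fin n) ℝ} (hU : matSpectralNorm U ≤ 1) (i : Fin m) :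
    ∑ j, (U i j) ^ 2 ≤ 1 := by
  set s := ∑ j, (U i j) ^ 2 with hs
  have hs0 : 0 ≤ s := Finset.sum_nonneg fun j _ => sq_nonneg _
  rcases eq_or_lt_of_le hs0 with h0 | h0
  · linarith
  · set r := Real.sqrt s with hr
    have hr0 : 0 < r := Real.sqrt_pos.mpr h0
    have hrs : r * r = s := Real.mul_self_sqrt hs0
    have hx : (∑ j, (U i j / r) ^ 2) ≤ 1 := by
      have : (∑ j, (U i j / r) ^ 2) = s / (r * r) := by
        rw [hs, Finset.sum_div, ← sq r]
        exact Finset.sum_congr rfl fun j _ => div_pow _ _ _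
      rw [this, hrs, div_self (ne_of_gt h0)]
    have hinner : (∑ j, U i j * (U i j / r)) = r := by
      have : (∑ j, U i j * (U i j / r)) = s / r := by
        rw [hs, Finset.sum_div]
        exact Finset.sum_congr rfl fun j _ => by field_simp
      rw [this]
      field_simp
      linarith [hrs]
    have h := le_spec U (fun j => U i j / r) hx
    have hlow : r ≤ Real.sqrt (∑ i', (∑ j, U i' j * (U i j / r)) ^ 2) := by
      have hmem : (∑ j, U i j * (U i j / r)) ^ 2 ≤
          ∑ i', (∑ j, U i' j * (U i j / r)) ^ 2 :=
        Finset.single_le_sum (f := fun i' => (∑ j, U i' j * (U i j / r)) ^ 2)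
          (fun i' _ => sq_nonneg _) (Finset.mem_univ i)
      rw [hinner] at hmem
      calc r = Real.sqrt (r ^ 2) := by rw [Real.sqrt_sq hr0.le]
        _ ≤ _ := Real.sqrt_le_sqrt hmem
    have : r ≤ 1 := le_trans hlow (h.trans hU)
    nlinarith

lemma entry_bd {U : Matrix (Fin m) (Fin n) ℝ} (hU : matSpectralNorm U ≤ 1)
    (i : Fin m) (j : Fin n) : |U i j| ≤ 1 := by
  have h1 : (U i j) ^ 2 ≤ ∑ j', (U i j') ^ 2 :=
    Finset.single_le_sum (f := fun j' => (U i j') ^ 2)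
      (fun j' _ => sq_nonneg _) (Finset.mem_univ j)
  have h2 := row_bd hU i
  nlinarith [abs_nonneg (U i j), sq_abs (U i j)]

lemma fprod_self_nonneg (U : Matrix (Fin m) (Fin n) ℝ) : 0 ≤ fprod U U :=
  Finset.sum_nonneg fun i _ => Finset.sum_nonneg fun j _ => mul_self_nonneg _

lemma fprod_le_l1 {U : Matrix (Fin m) (Fin n) ℝ} (hU : matSpectralNorm U ≤ 1)
    (X : Matrix (Fin m) (Fin n) ℝ) : fprod X U ≤ l1 X := by
  apply Finset.sum_le_sum; intro i _
  apply Finset.sum_le_sum; intro j _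
  calc X i j * U i j ≤ |X i j * U i j| := le_abs_self _
    _ = |X i j| * |U i j| := abs_mul _ _
    _ ≤ |X i j| * 1 := mul_le_mul_of_nonneg_left (entry_bd hU i j) (abs_nonneg _)
    _ = |X i j| := mul_one _

lemma fprod_self_le {U : Matrix (Fin m) (Fin n) ℝ} (hU : matSpectralNorm U ≤ 1) :
    fprod U U ≤ ((min m n : ℕ) : ℝ) := by
  have hsq : fprod U U = ∑ i, ∑ j, (U i j) ^ 2 := by
    unfold fprod; exact Finset.sum_congr rfl fun i _ =>
      Finset.sum_congr rfl fun j _ => (sq (U i j)).symm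
  have hm : fprod U U ≤ (m : ℝ) := by
    rw [hsq]
    calc ∑ i, ∑ j, (U i j) ^ 2 ≤ ∑ _i : Fin m, (1:ℝ) :=
          Finset.sum_le_sum fun i _ => row_bd hU i
      _ = (m : ℝ) := by simp
  have hn : fprod U U ≤ (n : ℝ) := by
    rw [hsq, Finset.sum_comm]
    calc ∑ j, ∑ i, (U i j) ^ 2 ≤ ∑ _j : Fin n, (1:ℝ) :=
          Finset.sum_le_sum fun j _ => col_bd hU j
      _ = (n : ℝ) := by simp
  push_cast
  exact le_min hm hn

lemma spec_zero_le : matSpectralNorm (0 : Matrix (Fin m) (Fin n) ℝ) ≤ 1 := by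
  apply csSup_le
  · exact ⟨0, 0, by simp, by simp⟩
  · rintro t ⟨x, hx, rfl⟩
    simp

end aux

theorem stmt16 {m n : ℕ} (μ : ℝ) (hμ : 0 < μ) (X : Matrix (Fin m) (Fin n) ℝ) :
    0 ≤ nuclearNorm X - fmu μ X ∧
    nuclearNorm X - fmu μ X ≤ μ / 2 * (min m n : ℕ) := by
  have hμ2 : (0:ℝ) ≤ μ / 2 := by linarith
  have nuc_bdd : BddAbove {t | ∃ U : Matrix (Fin m) (Fin n) ℝ,
      matSpectralNorm U ≤ 1 ∧ t = fprod X U} := by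
    refine ⟨l1 X, ?_⟩
    rintro t ⟨U, hU, rfl⟩
    exact fprod_le_l1 hU X
  have fmu_bdd : BddAbove {t | ∃ U : Matrix (Fin m) (Fin n) ℝ,
      matSpectralNorm U ≤ 1 ∧ t = fprod X U - μ / 2 * fprod U U} := by
    refine ⟨l1 X, ?_⟩
    rintro t ⟨U, hU, rfl⟩
    have h1 := fprod_le_l1 hU X
    have h2 := fprod_self_nonneg U
    nlinarith
  have nuc_ne : (0:ℝ) ∈ {t | ∃ U : Matrix (Fin m) (Fin n) ℝ,
      matSpectralNorm U ≤ 1 ∧ t = fprod X U} :=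
    ⟨0, spec_zero_le, by simp [fprod]⟩
  have fmu_ne : (0:ℝ) ∈ {t | ∃ U : Matrix (Fin m) (Fin n) ℝ,
      matSpectralNorm U ≤ 1 ∧ t = fprod X U - μ / 2 * fprod U U} :=
    ⟨0, spec_zero_le, by simp [fprod]⟩
  have h1 : fmu μ X ≤ nuclearNorm X := by
    apply csSup_le ⟨0, fmu_ne⟩
    rintro t ⟨U, hU, rfl⟩
    have hmem : fprod X U ≤ nuclearNorm X := le_csSup nuc_bdd ⟨U, hU, rfl⟩
    have h2 := fprod_self_nonneg U
    nlinarith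
  have h2 : nuclearNorm X ≤ fmu μ X + μ / 2 * ((min m n : ℕ) : ℝ) := by
    apply csSup_le ⟨0, nuc_ne⟩
    rintro t ⟨U, hU, rfl⟩
    have hf : fprod X U - μ / 2 * fprod U U ≤ fmu μ X :=
      le_csSup fmu_bdd ⟨U, hU, rfl⟩
    have hUU := fprod_self_le hU
    nlinarith
  constructor
  · linarith
  · linarith
end
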